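/- Define the game β-Wythoff Nim for irrational β > 2: positions are pairs of nonnegative integers; from a position where some coordinate equals ⌊nβ⌋ for a positive integer n, only Nim-type moves (subtracting a positive integer from exactly one coordinate) are allowed; from other positions, one may additionally subtract (s,t) with s,t ≥ 0, |s-t| < ⌊β⌋, not both zero, keeping coordinates nonnegative. Then, under normal play, the set of P-positions (previous-player winning positions) is exactly {(⌊nα⌋, ⌊nβ⌋), (⌊nβ⌋, ⌊nα⌋) : n nonnegative integer}, where α = β/(β-1). -/

import Mathlib

/-- A position of β-Wythoff Nim: a pair of nonnegative integers. -/
abbrev BWPos := ℕ × ℕ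

/-- `x` is a value of the β-Beatty sequence `⌊nβ⌋`, `n ≥ 1`. -/
def IsBeattyB (β : ℝ) (x : ℕ) : Prop := ∃ n : ℕ, 0 < n ∧ (x : ℤ) = ⌊(n : ℝ) * β⌋

/-- A Nim-type move: subtract a positive integer from exactly one coordinate. -/
def NimMove (p q : BWPos) : Prop :=
  (q.1 < p.1 ∧ q.2 = p.2) ∨ (q.1 = p.1 ∧ q.2 < p.2)

/-- An extended-diagonal move: subtract `(s, t)`, not both zero, with
`|s - t| < ⌊β⌋`. -/
def DiagMove (β : ℝ) (p q : BWPos) : Prop :=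
  ∃ s t : ℕ, q.1 + s = p.1 ∧ q.2 + t = p.2 ∧ ¬(s = 0 ∧ t = 0) ∧
    |(s : ℤ) - (t : ℤ)| < ⌊β⌋

/-- A legal move of β-Wythoff Nim: from positions having a coordinate of the
form `⌊nβ⌋` (`n ≥ 1`) only Nim-type moves are allowed; from other positions
one may additionally make extended-diagonal moves. -/
def BWMove (β : ℝ) (p q : BWPos) : Prop :=
  NimMove p q ∨
    (¬ IsBeattyB β p.1 ∧ ¬ IsBeattyB β p.2 ∧ DiagMove β p q)

theorem bwmove_decreasing {β : ℝ} {p q : BWPos} (h : BWMove β p q) :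
    q.1 + q.2 < p.1 + p.2 := by
  rcases h with h | ⟨-, -, s, t, h1, h2, h3, -⟩
  · rcases h with ⟨h1, h2⟩ | ⟨h1, h2⟩ <;> omega
  · omega

/-- `p` is a P-position (previous-player win under normal play): every legal
move from `p` leads to a non-P-position. -/
def BWPpos (β : ℝ) (p : BWPos) : Prop :=
  ∀ q : BWPos, BWMove β p q → ¬ BWPpos β q
termination_by p.1 + p.2
decreasing_by exact bwmove_decreasing (by assumption)

namespace BWAux

noncomputable def bwA (β : ℝ) (n : ℕ) : ℤ := ⌊(n : ℝ) * (β / (β - 1))⌋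
noncomputable def bwB (β : ℝ) (n : ℕ) : ℤ := ⌊(n : ℝ) * β⌋

variable {β : ℝ}

lemma alpha_gt (hβ : 2 < β) : 1 < β / (β - 1) :=
  (one_lt_div (by linarith)).2 (by linarith)

lemma alpha_lt (hβ : 2 < β) : β / (β - 1) < 2 :=
  (div_lt_iff₀ (by linarith)).2 (by linarith)

lemma floor_beta_ge (hβ : 2 < β) : 2 ≤ ⌊β⌋ := by
  have : ((2:ℤ):ℝ) ≤ β := by norm_num; linarith
  exact Int.le_floor.2 this

lemma bwA_zero : bwA β 0 = 0 := by simp [bwA]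
lemma bwB_zero : bwB β 0 = 0 := by simp [bwB]

lemma bwA_step (hβ : 2 < β) (n : ℕ) :
    bwA β n + 1 ≤ bwA β (n+1) ∧ bwA β (n+1) ≤ bwA β n + 2 := by
  set α := β / (β - 1) with hαdef
  have hα1 : 1 < α := alpha_gt hβ
  have hα2 : α < 2 := alpha_lt hβ
  have e : ((n+1 : ℕ) : ℝ) * α = (n : ℝ) * α + α := by push_cast; ring
  have hfl := Int.floor_le ((n : ℝ) * α)
  have hfu := Int.lt_floor_add_one ((n : ℝ) * α)
  constructor
  · apply Int.le_floor.2
    rw [e]; push_cast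
    simp only [bwA, ← hαdef]
    push_cast
    linarith
  · have : bwA β (n+1) < bwA β n + 3 := by
      apply Int.floor_lt.2
      rw [e]; push_cast
      simp only [bwA, ← hαdef]
      push_cast
      linarith
    omega

lemma bwB_step (hβ : 2 < β) (n : ℕ) :
    bwB β n + ⌊β⌋ ≤ bwB β (n+1) ∧ bwB β (n+1) ≤ bwB β n + ⌊β⌋ + 1 := by
  have e : ((n+1 : ℕ) : ℝ) * β = (n : ℝ) * β + β := by push_cast; ring
  have hfl := Int.floor_le ((n : ℝ) * β)
  have hfu := Int.lt_floor_add_one ((n : ℝ) * β)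
  have hbl := Int.floor_le β
  have hbu := Int.lt_floor_add_one β
  constructor
  · apply Int.le_floor.2
    rw [e]; push_cast
    simp only [bwB]
    push_cast
    linarith
  · have : bwB β (n+1) < bwB β n + ⌊β⌋ + 2 := by
      apply Int.floor_lt.2
      rw [e]; push_cast
      simp only [bwB]
      push_cast
      linarith
    omega

lemma bwA_mono (hβ : 2 < β) : StrictMono (bwA β) :=
  strictMono_nat_of_lt_succ (fun n => by have := bwA_step hβ n; omega)

lemma bwB_mono (hβ : 2 < β) : StrictMono (bwB β) :=
  strictMono_nat_of_lt_succ
    (fun n => by have := bwB_step hβ n; have := floor_beta_ge hβ; omega)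

lemma bwA_ge (hβ : 2 < β) (n : ℕ) : (n : ℤ) ≤ bwA β n := by
  induction n with
  | zero => simp [bwA_zero]
  | succ n ih => have := bwA_step hβ n; omega

lemma bwA_lt_two_mul (hβ : 2 < β) {n : ℕ} (hn : 0 < n) : bwA β n < 2 * n := by
  apply Int.floor_lt.2
  push_cast
  have hα2 : β / (β - 1) < 2 := alpha_lt hβ
  have hn' : (0:ℝ) < n := by exact_mod_cast hn
  calc (n : ℝ) * (β / (β-1)) < (n:ℝ) * 2 := by
        exact mul_lt_mul_of_pos_left hα2 hn'
    _ = 2 * n := by ring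

lemma bwB_ge (hβ : 2 < β) (n : ℕ) : 2 * (n : ℤ) ≤ bwB β n := by
  apply Int.le_floor.2
  push_cast
  have hn' : (0:ℝ) ≤ n := by positivity
  nlinarith

lemma bwA_lt_bwB (hβ : 2 < β) {n : ℕ} (hn : 0 < n) : bwA β n < bwB β n := by
  have h1 := bwA_lt_two_mul hβ hn
  have h2 := bwB_ge hβ n
  omega

lemma bwA_nonneg (hβ : 2 < β) (n : ℕ) : 0 ≤ bwA β n := le_trans (by positivity) (bwA_ge hβ n)
lemma bwB_nonneg (hβ : 2 < β) (n : ℕ) : 0 ≤ bwB β n := le_trans (by positivity) (bwB_ge hβ n)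

lemma conj (hβ : 2 < β) : β.HolderConjugate (β / (β - 1)) :=
  (Real.holderConjugate_iff_eq_conjExponent (by linarith)).2 rfl

lemma mem_bseq (hβ : 2 < β) {k : ℕ} (hk : 0 < k) :
    bwB β k ∈ {x | ∃ j > 0, beattySeq β j = x} :=
  ⟨(k : ℤ), by exact_mod_cast hk, by simp [beattySeq, bwB]⟩

lemma mem_aseq (hβ : 2 < β) {k : ℕ} (hk : 0 < k) :
    bwA β k ∈ {x | ∃ j > 0, beattySeq (β / (β-1)) j = x} :=
  ⟨(k : ℤ), by exact_mod_cast hk, by simp [beattySeq, bwA]⟩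

lemma beatty_cover (hirr : Irrational β) (hβ : 2 < β) {z : ℤ} (hz : 0 < z) :
    (∃ k : ℕ, 0 < k ∧ z = bwA β k) ∨ (∃ k : ℕ, 0 < k ∧ z = bwB β k) := by
  have hsym := hirr.beattySeq_symmDiff_beattySeq_pos (conj hβ)
  have hz' : z ∈ symmDiff {x | ∃ j > 0, beattySeq β j = x} {x | ∃ j > 0, beattySeq (β/(β-1)) j = x} := by
    rw [hsym]; exact hz
  rw [Set.mem_symmDiff] at hz'
  rcases hz' with ⟨⟨j, hj, hjz⟩, -⟩ | ⟨⟨j, hj, hjz⟩, -⟩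
  · right
    refine ⟨j.toNat, by omega, ?_⟩
    rw [← hjz]
    simp only [beattySeq, bwB]
    congr 2
    exact_mod_cast (Int.toNat_of_nonneg (le_of_lt hj)).symm
  · left
    refine ⟨j.toNat, by omega, ?_⟩
    rw [← hjz]
    simp only [beattySeq, bwA]
    congr 2
    exact_mod_cast (Int.toNat_of_nonneg (le_of_lt hj)).symm

lemma beatty_disj (hirr : Irrational β) (hβ : 2 < β) {k m : ℕ}
    (hk : 0 < k) (hm : 0 < m) : bwA β k ≠ bwB β m := by
  intro he
  have hsym := hirr.beattySeq_symmDiff_beattySeq_pos (conj hβ)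
  have hz : (0:ℤ) < bwA β k := by
    have := bwA_ge hβ k; omega
  have hz' : bwA β k ∈ symmDiff {x | ∃ j > 0, beattySeq β j = x} {x | ∃ j > 0, beattySeq (β/(β-1)) j = x} := by
    rw [hsym]; exact hz
  rw [Set.mem_symmDiff] at hz'
  have h1 := mem_aseq hβ hk
  have h2 := mem_bseq hβ hm
  rw [← he] at h2
  tauto

lemma find_m (hβ : 2 < β) {D : ℤ} (hD : 0 ≤ D) :
    ∀ k : ℕ, D < bwB β k - bwA β k →
    ∃ m : ℕ, m < k ∧ bwB β m - bwA β m ≤ D ∧ D < bwB β m - bwA β m + ⌊β⌋ := by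
  intro k
  induction k with
  | zero => intro h; rw [bwA_zero, bwB_zero] at h; omega
  | succ k ih =>
    intro h
    by_cases hc : D < bwB β k - bwA β k
    · obtain ⟨m, hm, h1, h2⟩ := ih hc
      exact ⟨m, by omega, h1, h2⟩
    · have hA := bwA_step hβ k
      have hB := bwB_step hβ k
      exact ⟨k, by omega, by omega, by omega⟩

/-- The candidate P-position set. -/
def bwS (β : ℝ) (p : BWPos) : Prop :=
  ∃ n : ℕ, ((p.1 : ℤ) = bwA β n ∧ (p.2 : ℤ) = bwB β n) ∨
           ((p.1 : ℤ) = bwB β n ∧ (p.2 : ℤ) = bwA β n)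

lemma bwS_swap {p : BWPos} (h : bwS β p) : bwS β (p.2, p.1) := by
  obtain ⟨n, h | h⟩ := h
  · exact ⟨n, Or.inr ⟨h.2, h.1⟩⟩
  · exact ⟨n, Or.inl ⟨h.2, h.1⟩⟩

lemma move_swap {p q : BWPos} (h : BWMove β p q) : BWMove β (p.2, p.1) (q.2, q.1) := by
  rcases h with (⟨h1, h2⟩ | ⟨h1, h2⟩) | ⟨h1, h2, s, t, e1, e2, e3, e4⟩
  · exact Or.inl (Or.inr ⟨h2, h1⟩)
  · exact Or.inl (Or.inl ⟨h2, h1⟩)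
  · exact Or.inr ⟨h2, h1, t, s, e2, e1, by tauto, by rw [abs_sub_comm]; exact e4⟩

lemma isBeattyB_iff {x : ℕ} : IsBeattyB β x ↔ ∃ n : ℕ, 0 < n ∧ (x : ℤ) = bwB β n :=
  Iff.rfl

lemma not_beatty_val (hirr : Irrational β) (hβ : 2 < β) {x : ℕ}
    (h : ¬ IsBeattyB β x) (hx : 0 < x) : ∃ k : ℕ, 0 < k ∧ (x : ℤ) = bwA β k := by
  rcases beatty_cover hirr hβ (z := (x : ℤ)) (by exact_mod_cast hx) with h' | h'
  · exact h'
  · exact absurd (isBeattyB_iff.2 h') h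

/-- No move from a member of `bwS` stays in `bwS` (first-orientation case). -/
lemma L1half (hirr : Irrational β) (hβ : 2 < β) {p q : BWPos} {n : ℕ}
    (h1 : (p.1 : ℤ) = bwA β n) (h2 : (p.2 : ℤ) = bwB β n)
    (hmv : BWMove β p q) : ¬ bwS β q := by
  rcases Nat.eq_zero_or_pos n with rfl | hn
  · -- p = (0,0): no moves
    rw [bwA_zero] at h1; rw [bwB_zero] at h2
    exfalso
    rcases hmv with (⟨a, b⟩ | ⟨a, b⟩) | ⟨-, -, s, t, e1, e2, e3, -⟩ <;> omega
  · have hBy : IsBeattyB β p.2 := ⟨n, hn, h2⟩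
    rcases hmv with (⟨a, b⟩ | ⟨a, b⟩) | ⟨-, hb, -⟩
    · -- first coordinate decreased
      rintro ⟨m, ⟨c1, c2⟩ | ⟨c1, c2⟩⟩
      · have : m = n := (bwB_mono hβ).injective (by omega)
        subst this; omega
      · -- bwA β m = bwB β n
        have hABn : bwA β m = bwB β n := by omega
        rcases Nat.eq_zero_or_pos m with rfl | hm
        · rw [bwA_zero] at hABn
          have := bwB_ge hβ n; omega
        · exact beatty_disj hirr hβ hm hn hABn
    · -- second coordinate decreased
      rintro ⟨m, ⟨c1, c2⟩ | ⟨c1, c2⟩⟩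
      · have : m = n := (bwA_mono hβ).injective (by omega)
        subst this; omega
      · have hABn : bwA β n = bwB β m := by omega
        rcases Nat.eq_zero_or_pos m with rfl | hm
        · rw [bwB_zero] at hABn
          have := bwA_ge hβ n; omega
        · exact beatty_disj hirr hβ hn hm hABn
    · exact absurd hBy hb

lemma L1 (hirr : Irrational β) (hβ : 2 < β) {p q : BWPos}
    (hp : bwS β p) (hmv : BWMove β p q) : ¬ bwS β q := by
  obtain ⟨n, h | h⟩ := hp
  · exact L1half hirr hβ h.1 h.2 hmv
  · intro hq
    exact L1half hirr hβ (p := (p.2, p.1)) h.2 h.1 (move_swap hmv) (bwS_swap hq)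

/-- If the first coordinate is a `B`-value, there is a move into `bwS`. -/
lemma L2A (hirr : Irrational β) (hβ : 2 < β) {p : BWPos} {m : ℕ} (hm : 0 < m)
    (hx : (p.1 : ℤ) = bwB β m) (hp : ¬ bwS β p) :
    ∃ q : BWPos, BWMove β p q ∧ bwS β q := by
  have hAm := bwA_nonneg hβ m
  have hAB := bwA_lt_bwB hβ hm
  rcases lt_trichotomy ((p.2 : ℤ)) (bwA β m) with hy | hy | hy
  · -- p.2 < bwA β m : decrease first coordinate
    rcases Nat.eq_zero_or_pos p.2 with hy0 | hy0
    · refine ⟨(0, p.2), Or.inl (Or.inl ⟨by omega, rfl⟩), 0, Or.inl ⟨by simp [bwA_zero], ?_⟩⟩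
      rw [bwB_zero]; omega
    · rcases beatty_cover hirr hβ (z := (p.2 : ℤ)) (by exact_mod_cast hy0) with ⟨j, hj, hjv⟩ | ⟨j, hj, hjv⟩
      · -- p.2 = bwA β j, j < m; move to (bwB β j, bwA β j)
        have hjm : j < m := by
          have := (bwA_mono hβ).lt_iff_lt (a := j) (b := m); omega
        have hBj : bwB β j < bwB β m := bwB_mono hβ hjm
        have hBj0 := bwB_nonneg hβ j
        refine ⟨((bwB β j).toNat, p.2), Or.inl (Or.inl ⟨by omega, rfl⟩),
          j, Or.inr ⟨by omega, by omega⟩⟩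
      · -- p.2 = bwB β j; move to (bwA β j, bwB β j)
        have hABj := bwA_lt_bwB hβ hj
        have hAj0 := bwA_nonneg hβ j
        have : bwA β j < (p.1 : ℤ) := by
          have hBjm : bwB β j < bwB β m := by omega
          omega
        refine ⟨((bwA β j).toNat, p.2), Or.inl (Or.inl ⟨by omega, rfl⟩),
          j, Or.inl ⟨by omega, by omega⟩⟩
  · exact absurd ⟨m, Or.inr ⟨hx, by omega⟩⟩ hp
  · -- p.2 > bwA β m : decrease second coordinate to bwA β m
    refine ⟨(p.1, (bwA β m).toNat), Or.inl (Or.inr ⟨rfl, by omega⟩),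
      m, Or.inr ⟨hx, by omega⟩⟩

/-- If the first coordinate is an `A`-value and neither coordinate is a `B`-value,
with `p.1 ≤ p.2`, there is a move into `bwS`. -/
lemma L2C (hirr : Irrational β) (hβ : 2 < β) {p : BWPos} {k : ℕ} (hk : 0 < k)
    (hx : (p.1 : ℤ) = bwA β k) (hxy : p.1 ≤ p.2)
    (hxB : ¬ IsBeattyB β p.1) (hyB : ¬ IsBeattyB β p.2) :
    ∃ q : BWPos, BWMove β p q ∧ bwS β q := by
  have hABk := bwA_lt_bwB hβ hk
  rcases lt_trichotomy ((p.2 : ℤ)) (bwB β k) with hy | hy | hy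
  · -- diagonal move
    set D : ℤ := (p.2 : ℤ) - (p.1 : ℤ) with hD
    have hD0 : 0 ≤ D := by omega
    have hDk : D < bwB β k - bwA β k := by omega
    obtain ⟨m, hmk, hd1, hd2⟩ := find_m hβ hD0 k hDk
    have hAm : bwA β m < bwA β k := bwA_mono hβ hmk
    have hAm0 := bwA_nonneg hβ m
    have hBm0 := bwB_nonneg hβ m
    have hβ2 := floor_beta_ge hβ
    refine ⟨((bwA β m).toNat, (bwB β m).toNat), Or.inr ⟨hxB, hyB, ?_⟩,
      m, Or.inl ⟨by omega, by omega⟩⟩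
    refine ⟨p.1 - (bwA β m).toNat, p.2 - (bwB β m).toNat, by omega, by omega,
      by omega, ?_⟩
    rw [abs_lt]
    constructor <;> [skip; skip] <;> omega
  · exact absurd ⟨k, hk, hy⟩ hyB
  · -- decrease second coordinate to bwB β k
    have hBk0 := bwB_nonneg hβ k
    refine ⟨(p.1, (bwB β k).toNat), Or.inl (Or.inr ⟨rfl, by omega⟩),
      k, Or.inl ⟨hx, by omega⟩⟩

lemma L2 (hirr : Irrational β) (hβ : 2 < β) {p : BWPos} (hp : ¬ bwS β p) :
    ∃ q : BWPos, BWMove β p q ∧ bwS β q := by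
  by_cases hx : IsBeattyB β p.1
  · obtain ⟨m, hm, hmv⟩ := hx
    exact L2A hirr hβ hm hmv hp
  by_cases hy : IsBeattyB β p.2
  · obtain ⟨m, hm, hmv⟩ := hy
    have hp' : ¬ bwS β (p.2, p.1) := fun h => hp (bwS_swap h)
    obtain ⟨q, hq1, hq2⟩ := L2A hirr hβ (p := (p.2, p.1)) hm hmv hp'
    exact ⟨(q.2, q.1), move_swap hq1, bwS_swap hq2⟩
  -- neither coordinate is a B-value
  rcases Nat.eq_zero_or_pos p.1 with h1 | h1
  · rcases Nat.eq_zero_or_pos p.2 with h2 | h2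
    · exact absurd ⟨0, Or.inl ⟨by simp [bwA_zero, h1], by simp [bwB_zero, h2]⟩⟩ hp
    · exact ⟨(p.1, 0), Or.inl (Or.inr ⟨rfl, h2⟩),
        0, Or.inl ⟨by simp [bwA_zero, h1], by simp [bwB_zero]⟩⟩
  rcases Nat.eq_zero_or_pos p.2 with h2 | h2
  · exact ⟨(0, p.2), Or.inl (Or.inl ⟨h1, rfl⟩),
      0, Or.inl ⟨by simp [bwA_zero], by simp [bwB_zero, h2]⟩⟩
  obtain ⟨k, hk, hkv⟩ := not_beatty_val hirr hβ hx h1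
  obtain ⟨j, hj, hjv⟩ := not_beatty_val hirr hβ hy h2
  rcases le_or_gt p.1 p.2 with hle | hlt
  · exact L2C hirr hβ hk hkv hle hx hy
  · obtain ⟨q, hq1, hq2⟩ := L2C hirr hβ (p := (p.2, p.1)) hj hjv (by omega) hy hx
    exact ⟨(q.2, q.1), move_swap hq1, bwS_swap hq2⟩

lemma main_iff (hirr : Irrational β) (hβ : 2 < β) :
    ∀ p : BWPos, BWPpos β p ↔ bwS β p := by
  have key : ∀ N : ℕ, ∀ p : BWPos, p.1 + p.2 = N → (BWPpos β p ↔ bwS β p) := by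
    intro N
    induction N using Nat.strong_induction_on with
    | _ N ih =>
      intro p hpN
      rw [BWPpos]
      constructor
      · intro h
        by_contra hS
        obtain ⟨q, hq1, hq2⟩ := L2 hirr hβ hS
        have hlt : q.1 + q.2 < N := hpN ▸ bwmove_decreasing hq1
        exact h q hq1 ((ih _ hlt q rfl).2 hq2)
      · intro hS q hq hPq
        have hlt : q.1 + q.2 < N := hpN ▸ bwmove_decreasing hq
        exact L1 hirr hβ hS hq ((ih _ hlt q rfl).1 hPq)
  exact fun p => key (p.1 + p.2) p rfl

end BWAux

/-- Main Theorem: the P-positions of β-Wythoff Nim are exactly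
`(⌊nα⌋, ⌊nβ⌋)` and `(⌊nβ⌋, ⌊nα⌋)`, `n ≥ 0`, where `α = β/(β-1)`. -/
theorem stmt_10 (β : ℝ) (hirr : Irrational β) (hβ : 2 < β)
    (α : ℝ) (hα : α = β / (β - 1)) :
    ∀ p : BWPos, BWPpos β p ↔
      ∃ n : ℕ, ((p.1 : ℤ), (p.2 : ℤ)) = (⌊(n : ℝ) * α⌋, ⌊(n : ℝ) * β⌋) ∨
               ((p.1 : ℤ), (p.2 : ℤ)) = (⌊(n : ℝ) * β⌋, ⌊(n : ℝ) * α⌋) := by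
  subst hα
  intro p
  rw [BWAux.main_iff hirr hβ p]
  unfold BWAux.bwS
  constructor
  · rintro ⟨n, ⟨h1, h2⟩ | ⟨h1, h2⟩⟩
    · exact ⟨n, Or.inl (by rw [Prod.mk.injEq]; exact ⟨h1, h2⟩)⟩
    · exact ⟨n, Or.inr (by rw [Prod.mk.injEq]; exact ⟨h1, h2⟩)⟩
  · rintro ⟨n, h | h⟩ <;> rw [Prod.mk.injEq] at h
    · exact ⟨n, Or.inl ⟨h.1, h.2⟩⟩
    · exact ⟨n, Or.inr ⟨h.1, h.2⟩⟩
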